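/- Let f₁, f₂, … be non-constant holomorphic self-maps of the open unit disc 𝔻 such that Σₙ ρ(fₙ(a), a) < ∞ and Σₙ ρ(fₙ(b), b) < ∞ for two distinct points a, b ∈ 𝔻. Then the left-composition sequence Fₙ = fₙ ∘ fₙ₋₁ ∘ ⋯ ∘ f₁ converges locally uniformly on 𝔻 to a non-constant holomorphic self-map of 𝔻. -/

import Mathlib

open Complex Set Filter Metric

open Topology

noncomputable def Complex.abs : AbsoluteValue ℂ ℝ := NormedField.toAbsoluteValue ℂ

lemma Complex.abs_eq_norm' (z : ℂ) : Complex.abs z = ‖z‖ := rfl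

lemma Complex.norm_eq_abs (z : ℂ) : ‖z‖ = Complex.abs z := rfl

lemma Complex.continuous_abs : Continuous (fun z : ℂ => Complex.abs z) := continuous_norm

lemma Complex.abs_conj (z : ℂ) : Complex.abs ((starRingEnd ℂ) z) = Complex.abs z := by
  rw [Complex.abs_eq_norm', Complex.abs_eq_norm', Complex.norm_conj]

lemma Complex.abs_apply (z : ℂ) : Complex.abs z = Real.sqrt (Complex.normSq z) := Complex.norm_def z

lemma Complex.abs_ofReal (r : ℝ) : Complex.abs (r : ℂ) = |r| := by
  rw [Complex.abs_eq_norm', Complex.norm_real, Real.norm_eq_abs]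

lemma Complex.abs_re_le_abs (z : ℂ) : |z.re| ≤ Complex.abs z := Complex.abs_re_le_norm z

lemma Complex.sq_abs (z : ℂ) : Complex.abs z ^ 2 = Complex.normSq z := Complex.sq_norm z

lemma Complex.abs_le_abs_of_mapsTo_ball_self {f : ℂ → ℂ} {R : ℝ} {z : ℂ}
    (hd : DifferentiableOn ℂ f (ball 0 R)) (h_maps : MapsTo f (ball 0 R) (ball 0 R))
    (h₀ : f 0 = 0) (hz : Complex.abs z < R) : Complex.abs (f z) ≤ Complex.abs z :=
  Complex.norm_le_norm_of_mapsTo_ball hd (h_maps.mono_right ball_subset_closedBall) h₀ hz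

/-- The open unit disc in the complex plane. -/
def unitDisc : Set ℂ := {z : ℂ | ‖z‖ < 1}

/-- Inverse hyperbolic tangent. -/
noncomputable def artanh (x : ℝ) : ℝ := (1 / 2) * Real.log ((1 + x) / (1 - x))

/-- The hyperbolic distance on the unit disc, induced by the Riemannian metric
`2|dz|/(1-|z|²)`. -/
noncomputable def hdist (z w : ℂ) : ℝ :=
  2 * artanh ‖(z - w) / (1 - (starRingEnd ℂ) w * z)‖

/-- Left compositions: `leftComp f n = f (n-1) ∘ ⋯ ∘ f 1 ∘ f 0`, so that `f k`
plays the role of the `(k+1)`-st map `f_{k+1}` of the sequence. -/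
def leftComp (f : ℕ → ℂ → ℂ) : ℕ → ℂ → ℂ
  | 0 => id
  | n + 1 => f n ∘ leftComp f n

/-- Right compositions: `rightComp g n = g 0 ∘ g 1 ∘ ⋯ ∘ g (n-1)`, so that `g k`
plays the role of the `(k+1)`-st map `g_{k+1}` of the sequence. -/
def rightComp (g : ℕ → ℂ → ℂ) : ℕ → ℂ → ℂ
  | 0 => id
  | n + 1 => rightComp g n ∘ g n

/-- pseudo-hyperbolic distance -/
noncomputable def pd (z w : ℂ) : ℝ := Complex.abs ((z - w) / (1 - (starRingEnd ℂ) w * z))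

lemma mem_unitDisc {z : ℂ} : z ∈ unitDisc ↔ Complex.abs z < 1 := Iff.rfl

lemma unitDisc_eq_ball : unitDisc = Metric.ball (0:ℂ) 1 := by
  ext z; simp [unitDisc, Metric.mem_ball, Complex.dist_eq]

lemma isOpen_unitDisc : IsOpen unitDisc := by
  rw [unitDisc_eq_ball]; exact Metric.isOpen_ball

lemma denom_ne_zero {z w : ℂ} (hz : Complex.abs z < 1) (hw : Complex.abs w < 1) :
    (1 - (starRingEnd ℂ) w * z) ≠ 0 := by
  intro h
  have h1 : Complex.abs ((starRingEnd ℂ) w * z) < 1 := by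
    rw [map_mul, Complex.abs_conj]
    nlinarith [Complex.abs.nonneg w, Complex.abs.nonneg z]
  have h2 : (1 : ℂ) = (starRingEnd ℂ) w * z := by linear_combination h
  rw [← h2] at h1; simp at h1

lemma key_identity (z w : ℂ) :
    Complex.normSq (1 - (starRingEnd ℂ) w * z) - Complex.normSq (z - w)
      = (1 - Complex.normSq z) * (1 - Complex.normSq w) := by
  simp only [Complex.normSq_apply, Complex.sub_re, Complex.sub_im, Complex.mul_re, Complex.mul_im,
    Complex.one_re, Complex.one_im, Complex.conj_re, Complex.conj_im]
  ring

lemma pd_nonneg (z w : ℂ) : 0 ≤ pd z w := Complex.abs.nonneg _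

lemma pd_eq_div (z w : ℂ) :
    pd z w = Complex.abs (z - w) / Complex.abs (1 - (starRingEnd ℂ) w * z) := by
  simp [pd, map_div₀]

lemma pd_symm (z w : ℂ) : pd z w = pd w z := by
  rw [pd_eq_div, pd_eq_div]
  have h1 : Complex.abs (z - w) = Complex.abs (w - z) := Complex.abs.map_sub z w
  have h2 : Complex.abs (1 - (starRingEnd ℂ) w * z) = Complex.abs (1 - (starRingEnd ℂ) z * w) := by
    have : (1 - (starRingEnd ℂ) z * w) = (starRingEnd ℂ) (1 - (starRingEnd ℂ) w * z) := by
      simp [map_sub, map_mul, mul_comm]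
    rw [this, Complex.abs_conj]
  rw [h1, h2]

lemma pd_lt_one {z w : ℂ} (hz : Complex.abs z < 1) (hw : Complex.abs w < 1) : pd z w < 1 := by
  rw [pd_eq_div]
  have hd : (0:ℝ) < Complex.abs (1 - (starRingEnd ℂ) w * z) :=
    Complex.abs.pos (denom_ne_zero hz hw)
  rw [div_lt_one hd]
  have h1 : Complex.normSq (z - w) < Complex.normSq (1 - (starRingEnd ℂ) w * z) := by
    have := key_identity z w
    have hz' : Complex.normSq z < 1 := by rw [← Complex.sq_abs]; nlinarith [Complex.abs.nonneg z]
    have hw' : Complex.normSq w < 1 := by rw [← Complex.sq_abs]; nlinarith [Complex.abs.nonneg w]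
    nlinarith
  have := Real.sqrt_lt_sqrt (Complex.normSq_nonneg _) h1
  simpa [Complex.abs_apply] using this

lemma pd_zero_right (z : ℂ) : pd z 0 = Complex.abs z := by simp [pd]

lemma pd_self (z : ℂ) : pd z z = 0 := by simp [pd]

/-- Euclidean distance is at most twice the pseudo-hyperbolic distance. -/
lemma abs_sub_le_two_pd {z w : ℂ} (hz : Complex.abs z < 1) (hw : Complex.abs w < 1) :
    Complex.abs (z - w) ≤ 2 * pd z w := by
  rw [pd_eq_div]
  have hd : (0:ℝ) < Complex.abs (1 - (starRingEnd ℂ) w * z) :=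
    Complex.abs.pos (denom_ne_zero hz hw)
  rw [mul_div_assoc', le_div_iff₀ hd]
  have h2 : Complex.abs (1 - (starRingEnd ℂ) w * z) ≤ 2 := by
    calc Complex.abs (1 - (starRingEnd ℂ) w * z)
        ≤ Complex.abs 1 + Complex.abs ((starRingEnd ℂ) w * z) := by simpa [sub_eq_add_neg] using Complex.abs.add_le 1 (-((starRingEnd ℂ) w * z))
      _ ≤ 2 := by
          rw [map_mul, Complex.abs_conj, map_one]
          nlinarith [Complex.abs.nonneg w, Complex.abs.nonneg z]
  nlinarith [Complex.abs.nonneg (z - w)]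

/-! ### Möbius transformations of the disc -/

noncomputable def mob (c z : ℂ) : ℂ := (c - z) / (1 - (starRingEnd ℂ) c * z)

lemma abs_mob {c z : ℂ} : Complex.abs (mob c z) = pd z c := by
  rw [mob, pd_eq_div, map_div₀]
  congr 1
  exact Complex.abs.map_sub c z

lemma mob_mem {c z : ℂ} (hc : Complex.abs c < 1) (hz : Complex.abs z < 1) :
    Complex.abs (mob c z) < 1 := by
  rw [abs_mob]; exact pd_lt_one hz hc

lemma mob_zero {c : ℂ} : mob c 0 = c := by simp [mob]

lemma mob_self {c : ℂ} : mob c c = 0 := by simp [mob]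

lemma mob_mob {c z : ℂ} (hc : Complex.abs c < 1) (hz : Complex.abs z < 1) :
    mob c (mob c z) = z := by
  have h1 : (1 - (starRingEnd ℂ) c * z) ≠ 0 := denom_ne_zero hz hc
  have h2 : (1 - (starRingEnd ℂ) c * mob c z) ≠ 0 := denom_ne_zero (mob_mem hc hz) hc
  simp only [mob] at h2 ⊢
  rw [div_eq_iff h2]
  field_simp at h2 ⊢
  ring

/-- numerator identity -/
lemma mob_sub_mob (c z w : ℂ) (hcz : (1 - (starRingEnd ℂ) c * z) ≠ 0)
    (hcw : (1 - (starRingEnd ℂ) c * w) ≠ 0) :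
    mob c z - mob c w
      = ((starRingEnd ℂ) c * c - 1) * (z - w)
        / ((1 - (starRingEnd ℂ) c * z) * (1 - (starRingEnd ℂ) c * w)) := by
  rw [mob, mob, div_sub_div _ _ hcz hcw]
  congr 1
  ring

lemma one_sub_mob_mul (c z w : ℂ) (hcz : (1 - (starRingEnd ℂ) c * z) ≠ 0)
    (hcw : (1 - c * (starRingEnd ℂ) w) ≠ 0) :
    1 - (starRingEnd ℂ) (mob c w) * mob c z
      = (1 - (starRingEnd ℂ) c * c) * (1 - (starRingEnd ℂ) w * z)
        / ((1 - c * (starRingEnd ℂ) w) * (1 - (starRingEnd ℂ) c * z)) := by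
  simp only [mob, map_div₀, map_sub, map_mul, map_one, Complex.conj_conj]
  rw [div_mul_div_comm, one_sub_div (mul_ne_zero hcw hcz)]
  congr 1
  ring

lemma pd_mob {c z w : ℂ} (hc : Complex.abs c < 1) (hz : Complex.abs z < 1)
    (hw : Complex.abs w < 1) : pd (mob c z) (mob c w) = pd z w := by
  have hcz := denom_ne_zero hz hc
  have hcw := denom_ne_zero hw hc
  have hcw' : (1 - c * (starRingEnd ℂ) w) ≠ 0 := by
    intro h
    apply hcw
    have : (starRingEnd ℂ) (1 - c * (starRingEnd ℂ) w) = 0 := by rw [h]; simp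
    simpa [map_sub, map_mul, mul_comm] using this
  have hnum := mob_sub_mob c z w hcz hcw
  have hden := one_sub_mob_mul c z w hcz hcw'
  have hc2 : Complex.abs ((starRingEnd ℂ) c * c - 1) = 1 - Complex.normSq c := by
    have hnc : Complex.normSq c < 1 := by
      rw [← Complex.sq_abs]; nlinarith [Complex.abs.nonneg c]
    have : (starRingEnd ℂ) c * c - 1 = ((Complex.normSq c - 1 : ℝ) : ℂ) := by
      rw [mul_comm, Complex.mul_conj]; push_cast; ring
    rw [this, Complex.abs_ofReal, abs_of_nonpos (by nlinarith)]
    ring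
  have hc2' : Complex.abs (1 - (starRingEnd ℂ) c * c) = 1 - Complex.normSq c := by
    have : (1 - (starRingEnd ℂ) c * c) = -((starRingEnd ℂ) c * c - 1) := by ring
    rw [this, map_neg_eq_map]; exact hc2
  have hnsq : (0:ℝ) < 1 - Complex.normSq c := by
    have hnc : Complex.normSq c < 1 := by
      rw [← Complex.sq_abs]; nlinarith [Complex.abs.nonneg c]
    linarith
  have habs : Complex.abs (1 - c * (starRingEnd ℂ) w) = Complex.abs (1 - (starRingEnd ℂ) c * w) := by
    have : (1 - c * (starRingEnd ℂ) w) = (starRingEnd ℂ) (1 - (starRingEnd ℂ) c * w) := by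
      simp [map_sub, map_mul, mul_comm]
    rw [this, Complex.abs_conj]
  have h1 : Complex.abs (1 - (starRingEnd ℂ) c * z) > 0 := Complex.abs.pos hcz
  have h2 : Complex.abs (1 - (starRingEnd ℂ) c * w) > 0 := Complex.abs.pos hcw
  have hq : Complex.abs (1 - (starRingEnd ℂ) w * z) > 0 := Complex.abs.pos (denom_ne_zero hz hw)
  rw [pd, hnum, hden, map_div₀, map_div₀, map_div₀, map_mul, map_mul, map_mul, map_mul,
    hc2, hc2', habs, pd, map_div₀]
  set P := 1 - Complex.normSq c with hPdef
  field_simp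
  have hA : Complex.abs (1 - z * (starRingEnd ℂ) c) ≠ 0 := by rw [mul_comm]; exact h1.ne'
  have hB : Complex.abs (1 - w * (starRingEnd ℂ) c) ≠ 0 := by rw [mul_comm]; exact h2.ne'
  have hQ : Complex.abs (1 - z * (starRingEnd ℂ) w) ≠ 0 := by rw [mul_comm]; exact hq.ne'
  rw [div_eq_div_iff (mul_ne_zero (mul_ne_zero hA hB) hQ) hQ]
  ring

/-! ### Triangle inequality for the pseudo-hyperbolic distance -/

lemma pd_le_add_div {u v : ℂ} (hu : Complex.abs u < 1) (hv : Complex.abs v < 1) :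
    pd u v ≤ (Complex.abs u + Complex.abs v) / (1 + Complex.abs u * Complex.abs v) := by
  set X := Complex.abs u with hX
  set Y := Complex.abs v with hY
  have hX0 : 0 ≤ X := Complex.abs.nonneg u
  have hY0 : 0 ≤ Y := Complex.abs.nonneg v
  set s : ℝ := ((starRingEnd ℂ) v * u).re with hs
  have hd : (0:ℝ) < Complex.abs (1 - (starRingEnd ℂ) v * u) :=
    Complex.abs.pos (denom_ne_zero hu hv)
  have hpos : (0:ℝ) < 1 + X * Y := by nlinarith
  rw [pd_eq_div, div_le_div_iff₀ hd hpos]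
  have e1 : (Complex.abs (u - v))^2 = X^2 + Y^2 - 2*s := by
    rw [Complex.sq_abs, hX, hY, Complex.sq_abs, Complex.sq_abs] at *
    simp only [Complex.normSq_apply, Complex.sub_re, Complex.sub_im, hs, Complex.mul_re,
      Complex.conj_re, Complex.conj_im]
    ring
  have e2 : (Complex.abs (1 - (starRingEnd ℂ) v * u))^2 = 1 - 2*s + X^2 * Y^2 := by
    rw [Complex.sq_abs, hX, hY, Complex.sq_abs, Complex.sq_abs] at *
    simp only [Complex.normSq_apply, Complex.sub_re, Complex.sub_im, hs, Complex.mul_re,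
      Complex.mul_im, Complex.conj_re, Complex.conj_im, Complex.one_re, Complex.one_im]
    ring
  have hsle : |s| ≤ X * Y := by
    have h1 : |s| ≤ Complex.abs ((starRingEnd ℂ) v * u) := Complex.abs_re_le_abs _
    rwa [map_mul, Complex.abs_conj, mul_comm] at h1
  obtain ⟨hs1, hs2⟩ := abs_le.1 hsle
  have key : (Complex.abs (u - v))^2 * (1 + X*Y)^2 ≤ (X + Y)^2 * (Complex.abs (1 - (starRingEnd ℂ) v * u))^2 := by
    rw [e1, e2]
    nlinarith [mul_nonneg (mul_nonneg (by nlinarith : (0:ℝ) ≤ 1 - X^2) (by nlinarith : (0:ℝ) ≤ 1 - Y^2)) (by linarith : (0:ℝ) ≤ s + X*Y)]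
  have hA : (0:ℝ) ≤ Complex.abs (u - v) := Complex.abs.nonneg _
  nlinarith [mul_nonneg hA (le_of_lt hpos), mul_nonneg (by nlinarith : (0:ℝ) ≤ X + Y) hd.le,
    sq_nonneg (Complex.abs (u - v) * (1 + X*Y) - (X+Y) * Complex.abs (1 - (starRingEnd ℂ) v * u)),
    sq_nonneg (Complex.abs (u - v) * (1 + X*Y) + (X+Y) * Complex.abs (1 - (starRingEnd ℂ) v * u))]

lemma pd_triangle_strong {x y z : ℂ} (hx : Complex.abs x < 1) (hy : Complex.abs y < 1)
    (hz : Complex.abs z < 1) :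
    pd x z ≤ (pd x y + pd y z) / (1 + pd x y * pd y z) := by
  calc pd x z = pd (mob y x) (mob y z) := (pd_mob hy hx hz).symm
    _ ≤ (pd x y + pd y z) / (1 + pd x y * pd y z) := by
        have h2 := pd_le_add_div (mob_mem hy hx) (mob_mem hy hz)
        rwa [abs_mob, abs_mob, pd_symm z y] at h2

lemma pd_triangle {x y z : ℂ} (hx : Complex.abs x < 1) (hy : Complex.abs y < 1)
    (hz : Complex.abs z < 1) : pd x z ≤ pd x y + pd y z := by
  refine (pd_triangle_strong hx hy hz).trans ?_
  have h1 : (0:ℝ) ≤ pd x y + pd y z := add_nonneg (pd_nonneg x y) (pd_nonneg y z)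
  have h2 : (1:ℝ) ≤ 1 + pd x y * pd y z := by nlinarith [pd_nonneg x y, pd_nonneg y z]
  calc (pd x y + pd y z) / (1 + pd x y * pd y z) ≤ (pd x y + pd y z) / 1 :=
        div_le_div_of_nonneg_left h1 (by linarith) h2
    _ = pd x y + pd y z := by rw [div_one]
  
lemma frac_lt_one {p q : ℝ} (hp0 : 0 ≤ p) (hp : p < 1) (hq0 : 0 ≤ q) (hq : q < 1) :
    (p + q) / (1 + p * q) < 1 := by
  rw [div_lt_one (by nlinarith)]
  nlinarith

lemma frac_mono {x r β : ℝ} (hx0 : 0 ≤ x) (hxr : x ≤ r) (hβ0 : 0 ≤ β) (hβ : β < 1) :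
    (x + β) / (1 + x * β) ≤ (r + β) / (1 + r * β) := by
  rw [div_le_div_iff₀ (by nlinarith) (by nlinarith)]
  nlinarith [mul_nonneg (sub_nonneg.2 hxr) (by nlinarith : (0:ℝ) ≤ 1 - β^2)]

/-! ### "Translation" Möbius maps close to the identity -/

noncomputable def tr (c z : ℂ) : ℂ := (z + c) / (1 + (starRingEnd ℂ) c * z)

lemma tr_eq_mob_neg (c z : ℂ) : tr c z = mob c (-z) := by
  rw [tr, mob]
  congr 1 <;> ring

lemma tr_mem {c z : ℂ} (hc : Complex.abs c < 1) (hz : Complex.abs z < 1) :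
    Complex.abs (tr c z) < 1 := by
  rw [tr_eq_mob_neg]
  exact mob_mem hc (by rwa [Complex.abs.map_neg])

lemma pd_neg (z w : ℂ) : pd (-z) (-w) = pd z w := by
  rw [pd_eq_div, pd_eq_div]
  have h1 : (-z - -w) = -(z - w) := by ring
  have h2 : (1 - (starRingEnd ℂ) (-w) * (-z)) = 1 - (starRingEnd ℂ) w * z := by
    rw [map_neg]; ring
  rw [h1, h2, map_neg_eq_map]

lemma pd_tr {c z w : ℂ} (hc : Complex.abs c < 1) (hz : Complex.abs z < 1)
    (hw : Complex.abs w < 1) : pd (tr c z) (tr c w) = pd z w := by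
  rw [tr_eq_mob_neg, tr_eq_mob_neg, pd_mob hc (by rwa [Complex.abs.map_neg]) (by rwa [Complex.abs.map_neg]), pd_neg]

lemma tr_neg_eq (c w : ℂ) : tr (-c) w = - mob c w := by
  rw [tr, mob, map_neg, ← neg_div]
  congr 1 <;> ring

lemma tr_tr {c z : ℂ} (hc : Complex.abs c < 1) (hz : Complex.abs z < 1) :
    tr (-c) (tr c z) = z := by
  rw [tr_neg_eq, tr_eq_mob_neg, mob_mob hc (by rwa [Complex.abs.map_neg]), neg_neg]

lemma tr_tr' {c z : ℂ} (hc : Complex.abs c < 1) (hz : Complex.abs z < 1) :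
    tr c (tr (-c) z) = z := by
  have := tr_tr (c := -c) (z := z) (by rwa [Complex.abs.map_neg]) hz
  rwa [neg_neg] at this

lemma tr_zero (c : ℂ) : tr c 0 = c := by simp [tr]

lemma tr_self_neg (c : ℂ) : tr (-c) c = 0 := by
  rw [tr_neg_eq, mob_self, neg_zero]

/-- Displacement of the translation map. -/
lemma pd_tr_self {c w : ℂ} (hc : Complex.abs c < 1) (hw : Complex.abs w < 1) :
    pd (tr c w) w ≤ 2 * Complex.abs c / (1 - (Complex.abs w)^2) := by
  have hden : (1 + (starRingEnd ℂ) c * w) ≠ 0 := by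
    have := denom_ne_zero hw (show Complex.abs (-c) < 1 by rwa [Complex.abs.map_neg])
    rwa [map_neg, neg_mul, sub_neg_eq_add] at this
  have hA : tr c w - w = (c - (starRingEnd ℂ) c * w^2) / (1 + (starRingEnd ℂ) c * w) := by
    rw [tr, eq_div_iff hden, sub_mul, div_mul_cancel₀ _ hden]; ring
  have hB : 1 - (starRingEnd ℂ) w * tr c w
      = ((1 - (starRingEnd ℂ) w * w) + ((starRingEnd ℂ) c * w - c * (starRingEnd ℂ) w))
        / (1 + (starRingEnd ℂ) c * w) := by
    rw [tr, eq_div_iff hden, sub_mul, mul_assoc, div_mul_cancel₀ _ hden]; ring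
  have hnum : Complex.abs (c - (starRingEnd ℂ) c * w^2) ≤ 2 * Complex.abs c := by
    have h0 : c - (starRingEnd ℂ) c * w^2 = c + -((starRingEnd ℂ) c * w^2) := by ring
    rw [h0]
    refine (Complex.abs.add_le _ _).trans ?_
    rw [Complex.abs.map_neg, map_mul, Complex.abs_conj, map_pow]
    nlinarith [Complex.abs.nonneg c, Complex.abs.nonneg w,
      mul_nonneg (Complex.abs.nonneg c) (by nlinarith [Complex.abs.nonneg w] : (0:ℝ) ≤ 1 - (Complex.abs w)^2)]
  have hre : ((1 - (starRingEnd ℂ) w * w) + ((starRingEnd ℂ) c * w - c * (starRingEnd ℂ) w)).re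
      = 1 - (Complex.abs w)^2 := by
    simp only [Complex.add_re, Complex.sub_re, Complex.one_re, Complex.mul_re,
      Complex.conj_re, Complex.conj_im, ← Complex.sq_abs, Complex.normSq_apply]
    ring_nf
    rw [Complex.sq_abs, Complex.normSq_apply]
    ring
  have hwpos : (0:ℝ) < 1 - (Complex.abs w)^2 := by nlinarith [Complex.abs.nonneg w]
  have hden2 : 1 - (Complex.abs w)^2
      ≤ Complex.abs ((1 - (starRingEnd ℂ) w * w) + ((starRingEnd ℂ) c * w - c * (starRingEnd ℂ) w)) := by
    rw [← hre]
    exact (le_abs_self _).trans (Complex.abs_re_le_abs _)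
  have : pd (tr c w) w = Complex.abs (c - (starRingEnd ℂ) c * w^2)
      / Complex.abs ((1 - (starRingEnd ℂ) w * w) + ((starRingEnd ℂ) c * w - c * (starRingEnd ℂ) w)) := by
    have hBpos : (0:ℝ) < Complex.abs ((1 - (starRingEnd ℂ) w * w) + ((starRingEnd ℂ) c * w - c * (starRingEnd ℂ) w)) :=
      lt_of_lt_of_le hwpos hden2
    have hCpos : (0:ℝ) < Complex.abs (1 + (starRingEnd ℂ) c * w) := Complex.abs.pos hden
    rw [pd, hA, hB, map_div₀, map_div₀, map_div₀]
    rw [div_div_div_cancel_right₀]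
    exact ne_of_gt hCpos
  rw [this]
  exact div_le_div₀ (by positivity) hnum hwpos hden2

/-! ### Schwarz–Pick -/

lemma mob_differentiableOn {c : ℂ} (hc : Complex.abs c < 1) :
    DifferentiableOn ℂ (mob c) unitDisc := by
  apply DifferentiableOn.div
  · exact (differentiableOn_const c).sub differentiableOn_id
  · exact (differentiableOn_const 1).sub ((differentiableOn_const _).mul differentiableOn_id)
  · intro z hz
    exact denom_ne_zero hz hc

lemma mob_mapsTo {c : ℂ} (hc : Complex.abs c < 1) : MapsTo (mob c) unitDisc unitDisc :=
  fun _ hz => mob_mem hc hz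

lemma tr_differentiableOn {c : ℂ} (hc : Complex.abs c < 1) :
    DifferentiableOn ℂ (tr c) unitDisc := by
  have : DifferentiableOn ℂ (fun z => mob c (-z)) unitDisc := by
    apply (mob_differentiableOn hc).comp (differentiable_neg.differentiableOn)
    intro z hz
    simpa [mem_unitDisc, Complex.abs.map_neg] using hz
  apply this.congr
  intro z _
  exact tr_eq_mob_neg c z

lemma tr_mapsTo {c : ℂ} (hc : Complex.abs c < 1) : MapsTo (tr c) unitDisc unitDisc :=
  fun _ hz => tr_mem hc hz

theorem schwarz_pick {f : ℂ → ℂ} (hf : DifferentiableOn ℂ f unitDisc)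
    (hm : MapsTo f unitDisc unitDisc) {z w : ℂ} (hz : z ∈ unitDisc) (hw : w ∈ unitDisc) :
    pd (f z) (f w) ≤ pd z w := by
  have hfw : f w ∈ unitDisc := hm hw
  set q : ℂ → ℂ := fun ζ => mob (f w) (f (mob w ζ)) with hq
  have hq0 : q 0 = 0 := by
    simp only [hq, mob_zero, mob_self]
  have hqd : DifferentiableOn ℂ q unitDisc := by
    have h1 : DifferentiableOn ℂ (f ∘ mob w) unitDisc :=
      hf.comp (mob_differentiableOn hw) (mob_mapsTo hw)
    have h2 : MapsTo (f ∘ mob w) unitDisc unitDisc := hm.comp (mob_mapsTo hw)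
    exact ((mob_differentiableOn hfw).comp h1 h2).congr (fun x _ => rfl)
  have hqm : MapsTo q unitDisc unitDisc := by
    intro ζ hζ
    exact mob_mem hfw (hm (mob_mem hw hζ))
  have hmwz : Complex.abs (mob w z) < 1 := mob_mem hw hz
  have key : Complex.abs (q (mob w z)) ≤ Complex.abs (mob w z) := by
    rw [unitDisc_eq_ball] at hqd hqm
    exact Complex.abs_le_abs_of_mapsTo_ball_self hqd hqm hq0 hmwz
  have : q (mob w z) = mob (f w) (f z) := by
    simp only [hq, mob_mob hw hz]
  rw [this, abs_mob, abs_mob] at key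
  exact key

/-! ### artanh and the hyperbolic distance -/

lemma artanh_nonneg {x : ℝ} (h0 : 0 ≤ x) (h1 : x < 1) : 0 ≤ artanh x := by
  rw [artanh]
  have : (1:ℝ) ≤ (1 + x) / (1 - x) := by
    rw [le_div_iff₀ (by linarith)]; linarith
  have := Real.log_nonneg this
  linarith

lemma artanh_le_artanh {x y : ℝ} (h0 : 0 ≤ x) (hxy : x ≤ y) (hy : y < 1) :
    artanh x ≤ artanh y := by
  rw [artanh, artanh]
  have hx1 : x < 1 := lt_of_le_of_lt hxy hy
  have h : (1 + x) / (1 - x) ≤ (1 + y) / (1 - y) := by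
    rw [div_le_div_iff₀ (by linarith) (by linarith)]
    nlinarith
  have hpos : (0:ℝ) < (1 + x) / (1 - x) := div_pos (by linarith) (by linarith)
  have := Real.log_le_log hpos h
  linarith

lemma le_two_artanh {x : ℝ} (h0 : 0 ≤ x) (h1 : x < 1) : x ≤ 2 * artanh x := by
  rw [artanh]
  have hpos : (0:ℝ) < (1 + x) / (1 - x) := div_pos (by linarith) (by linarith)
  have key : Real.exp x ≤ (1 + x) / (1 - x) := by
    rw [le_div_iff₀ (by linarith)]
    have h2 : 1 - x ≤ Real.exp (-x) := by
      have := Real.add_one_le_exp (-x); linarith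
    calc Real.exp x * (1 - x) ≤ Real.exp x * Real.exp (-x) := by
          apply mul_le_mul_of_nonneg_left h2 (Real.exp_pos x).le
      _ = 1 := by rw [← Real.exp_add]; simp
      _ ≤ 1 + x := by linarith
  have := (Real.le_log_iff_exp_le hpos).2 key
  linarith

lemma artanh_add {u v : ℝ} (hu0 : 0 ≤ u) (hu1 : u < 1) (hv0 : 0 ≤ v) (hv1 : v < 1) :
    artanh u + artanh v = artanh ((u + v) / (1 + u * v)) := by
  have huv : (0:ℝ) < 1 + u * v := by nlinarith
  have hs1 : (u + v) / (1 + u * v) < 1 := frac_lt_one hu0 hu1 hv0 hv1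
  have e1 : 1 + (u + v) / (1 + u * v) = (1 + u) * (1 + v) / (1 + u * v) := by
    field_simp; ring
  have e2 : 1 - (u + v) / (1 + u * v) = (1 - u) * (1 - v) / (1 + u * v) := by
    field_simp; ring
  rw [artanh, artanh, artanh, e1, e2]
  have e3 : (1 + u) * (1 + v) / (1 + u * v) / ((1 - u) * (1 - v) / (1 + u * v))
      = ((1 + u) / (1 - u)) * ((1 + v) / (1 - v)) := by
    field_simp
  rw [e3, Real.log_mul (ne_of_gt (div_pos (by linarith) (by linarith)))
    (ne_of_gt (div_pos (by linarith) (by linarith)))]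
  ring

lemma hdist_eq (z w : ℂ) : hdist z w = 2 * artanh (pd z w) := rfl

lemma hdist_nonneg {z w : ℂ} (hz : Complex.abs z < 1) (hw : Complex.abs w < 1) :
    0 ≤ hdist z w := by
  rw [hdist_eq]
  have := artanh_nonneg (pd_nonneg z w) (pd_lt_one hz hw)
  linarith

lemma pd_le_hdist {z w : ℂ} (hz : Complex.abs z < 1) (hw : Complex.abs w < 1) :
    pd z w ≤ hdist z w := by
  rw [hdist_eq]
  exact le_two_artanh (pd_nonneg z w) (pd_lt_one hz hw)

lemma hdist_symm (z w : ℂ) : hdist z w = hdist w z := by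
  rw [hdist_eq, hdist_eq, pd_symm]

lemma hdist_triangle {x y z : ℂ} (hx : Complex.abs x < 1) (hy : Complex.abs y < 1)
    (hz : Complex.abs z < 1) : hdist x z ≤ hdist x y + hdist y z := by
  rw [hdist_eq, hdist_eq, hdist_eq]
  have h1 : artanh (pd x z) ≤ artanh ((pd x y + pd y z) / (1 + pd x y * pd y z)) := by
    apply artanh_le_artanh (pd_nonneg x z) (pd_triangle_strong hx hy hz)
    exact frac_lt_one (pd_nonneg x y) (pd_lt_one hx hy) (pd_nonneg y z) (pd_lt_one hy hz)
  rw [← artanh_add (pd_nonneg x y) (pd_lt_one hx hy) (pd_nonneg y z) (pd_lt_one hy hz)] at h1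
  linarith

lemma hdist_schwarz_pick {f : ℂ → ℂ} (hf : DifferentiableOn ℂ f unitDisc)
    (hm : MapsTo f unitDisc unitDisc) {z w : ℂ} (hz : z ∈ unitDisc) (hw : w ∈ unitDisc) :
    hdist (f z) (f w) ≤ hdist z w := by
  rw [hdist_eq, hdist_eq]
  have h1 := artanh_le_artanh (pd_nonneg (f z) (f w)) (schwarz_pick hf hm hz hw)
    (pd_lt_one hz hw)
  linarith

lemma hdist_zero_right (z : ℂ) : hdist z 0 = 2 * artanh (Complex.abs z) := by
  rw [hdist_eq, pd_zero_right]

lemma abs_le_of_hdist_le {z : ℂ} {B : ℝ} (hz : Complex.abs z < 1) (h : hdist z 0 ≤ B) :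
    Complex.abs z ≤ (Real.exp B - 1) / (Real.exp B + 1) := by
  rw [hdist_zero_right, artanh] at h
  set x := Complex.abs z with hx
  have hx0 : 0 ≤ x := Complex.abs.nonneg z
  have hpos : (0:ℝ) < (1 + x) / (1 - x) := div_pos (by linarith) (by linarith)
  have h2 : Real.log ((1 + x) / (1 - x)) ≤ B := by linarith
  have h3 : (1 + x) / (1 - x) ≤ Real.exp B := by
    rw [← Real.exp_log hpos]
    exact Real.exp_le_exp.2 h2
  rw [div_le_iff₀ (by linarith)] at h3
  rw [le_div_iff₀ (by positivity)]
  nlinarith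

lemma exp_frac_lt_one (B : ℝ) : (Real.exp B - 1) / (Real.exp B + 1) < 1 := by
  rw [div_lt_one (by positivity)]
  linarith

lemma exp_frac_nonneg {B : ℝ} (hB : 0 ≤ B) : 0 ≤ (Real.exp B - 1) / (Real.exp B + 1) := by
  have : (1:ℝ) ≤ Real.exp B := by
    rw [← Real.exp_zero]; exact Real.exp_le_exp.2 hB
  apply div_nonneg (by linarith) (by positivity)

/-! ### The core hyperbolic-distance inequality, centred at 0 -/

lemma zero_mem_unitDisc : (0:ℂ) ∈ unitDisc := by simp [mem_unitDisc]

lemma dslope_differentiableOn {g : ℂ → ℂ} (hg : DifferentiableOn ℂ g unitDisc) :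
    DifferentiableOn ℂ (dslope g 0) unitDisc := by
  intro x hx
  rcases eq_or_ne x 0 with rfl | hx0
  · have ha : AnalyticAt ℂ g 0 := (hg.analyticOnNhd isOpen_unitDisc) 0 zero_mem_unitDisc
    obtain ⟨p, hp⟩ := ha
    have h2 := hp.has_fpower_series_dslope_fslope
    exact (AnalyticAt.differentiableAt ⟨_, h2⟩).differentiableWithinAt
  · exact ((differentiableAt_dslope_of_ne hx0).2
      ((hg x hx).differentiableAt (isOpen_unitDisc.mem_nhds hx))).differentiableWithinAt

set_option maxHeartbeats 1000000 in
lemma core_disp {b : ℂ} (hb0 : b ≠ 0) (hb : Complex.abs b < 1) {r : ℝ}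
    (hbr : Complex.abs b ≤ r) (hr : r < 1) :
    ∃ C > 0, ∀ f : ℂ → ℂ, DifferentiableOn ℂ f unitDisc → MapsTo f unitDisc unitDisc →
      ∀ e₁ e₂ : ℝ, pd (f 0) 0 ≤ e₁ → pd (f b) b ≤ e₂ →
      ∀ z : ℂ, Complex.abs z ≤ r → pd (f z) z ≤ C * (e₁ + e₂) := by
  have hr0 : 0 ≤ r := le_trans (Complex.abs.nonneg b) hbr
  have hb0' : 0 < Complex.abs b := Complex.abs.pos hb0
  obtain ⟨r₁, hr₁def⟩ : ∃ x : ℝ, x = (1 + r) / 2 := ⟨_, rfl⟩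
  have hr₁ : r₁ < 1 := by rw [hr₁def]; linarith
  have hr₁0 : 0 ≤ r₁ := by rw [hr₁def]; linarith
  obtain ⟨d₁, hd₁def⟩ : ∃ x : ℝ, x = 1 - r₁^2 := ⟨_, rfl⟩
  have hd₁ : 0 < d₁ := by rw [hd₁def]; nlinarith
  obtain ⟨ρ₀, hρ₀def⟩ : ∃ x : ℝ, x = (r + Complex.abs b) / (1 + r * Complex.abs b) := ⟨_, rfl⟩
  have hρ₀lt : ρ₀ < 1 := by
    rw [hρ₀def]; exact frac_lt_one hr0 hr (Complex.abs.nonneg b) hb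
  have hρ₀0 : 0 ≤ ρ₀ := by
    rw [hρ₀def]
    apply div_nonneg (by linarith [Complex.abs.nonneg b])
      (by nlinarith [Complex.abs.nonneg b])
  obtain ⟨δ₀, hδ₀def⟩ : ∃ x : ℝ, x = (1 - r) / 2 := ⟨_, rfl⟩
  have hδ₀ : 0 < δ₀ := by rw [hδ₀def]; linarith
  obtain ⟨K₆, hK₆def⟩ : ∃ x : ℝ, x = (2 * ρ₀ / (1 - ρ₀) + 1) * (2 / Complex.abs b) := ⟨_, rfl⟩
  have hq5 : 0 ≤ 2 * ρ₀ / (1 - ρ₀) := div_nonneg (by linarith) (by linarith)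
  have hK₆0 : 0 < K₆ := by
    rw [hK₆def]
    exact mul_pos (by linarith) (div_pos two_pos hb0')
  have hr2 : (0:ℝ) < 1 - r^2 := by nlinarith
  obtain ⟨C, hCdef⟩ : ∃ x : ℝ, x = (K₆ * (2 / d₁ + 1) + 2) / (1 - r^2) + 2 / (1 - r) := ⟨_, rfl⟩
  have hCa : 0 < (K₆ * (2 / d₁ + 1) + 2) / (1 - r^2) := by
    apply div_pos ?_ hr2
    have : 0 < 2 / d₁ := div_pos two_pos hd₁
    nlinarith
  have hC : 0 < C := by
    rw [hCdef]
    have : 0 < 2 / (1 - r) := div_pos two_pos (by linarith)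
    linarith
  refine ⟨C, hC, ?_⟩
  intro f hf hm e₁ e₂ he₁ he₂ z hzr
  have hz : Complex.abs z < 1 := lt_of_le_of_lt hzr hr
  have hz' : z ∈ unitDisc := hz
  have hb' : b ∈ unitDisc := hb
  have he₁0 : 0 ≤ e₁ := le_trans (pd_nonneg _ _) he₁
  have he₂0 : 0 ≤ e₂ := le_trans (pd_nonneg _ _) he₂
  obtain ⟨E, hEdef⟩ : ∃ x : ℝ, x = e₁ + e₂ := ⟨_, rfl⟩
  have hE0 : 0 ≤ E := by rw [hEdef]; linarith
  have hCE : C * (e₁ + e₂) = C * E := by rw [hEdef]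
  rw [hCE]
  rcases lt_or_ge E δ₀ with hcase | hcase
  -- SMALL CASE
  · have hcd : f 0 ∈ unitDisc := hm zero_mem_unitDisc
    have hcabs : Complex.abs (f 0) ≤ e₁ := by
      rw [← pd_zero_right (f 0)]; exact he₁
    have hc1 : Complex.abs (f 0) < 1 := hcd
    have hnc1 : Complex.abs (-(f 0)) < 1 := by rwa [Complex.abs.map_neg]
    set g : ℂ → ℂ := fun x => tr (-(f 0)) (f x) with hgdef
    have hg_maps : MapsTo g unitDisc unitDisc := fun x hx => tr_mem hnc1 (hm hx)
    have hg_diff : DifferentiableOn ℂ g unitDisc :=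
      ((tr_differentiableOn hnc1).comp hf hm).congr (fun x _ => rfl)
    have hg0 : g 0 = 0 := tr_self_neg (f 0)
    have hfg : ∀ x, x ∈ unitDisc → f x = tr (f 0) (g x) := by
      intro x hx
      exact (tr_tr' hc1 (hm hx)).symm
    have he₁δ : e₁ ≤ E := by rw [hEdef]; linarith
    have he₂δ : e₂ ≤ E := by rw [hEdef]; linarith
    -- bound on |f b|
    have hfb : Complex.abs (f b) ≤ r₁ := by
      have h1 : pd (f b) 0 ≤ pd (f b) b + pd b 0 :=
        pd_triangle (hm hb') hb (by simp [mem_unitDisc])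
      rw [pd_zero_right, pd_zero_right] at h1
      have h2 : Complex.abs (f b) ≤ e₂ + Complex.abs b := by linarith [he₂]
      rw [hr₁def]
      rw [hδ₀def] at hcase
      linarith only [h2, hcase, he₂δ, hbr]
    -- bound β = pd (g b) b
    obtain ⟨β, hβdef⟩ : ∃ x : ℝ, x = pd (g b) b := ⟨_, rfl⟩
    have hβ0 : 0 ≤ β := by rw [hβdef]; exact pd_nonneg _ _
    have hβ : β ≤ 2 * e₁ / d₁ + e₂ := by
      have h1 : pd (g b) b ≤ pd (g b) (f b) + pd (f b) b :=
        pd_triangle (hg_maps hb') (hm hb') hb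
      have h2 : pd (g b) (f b) ≤ 2 * Complex.abs (f 0) / (1 - (Complex.abs (f b))^2) := by
        have := pd_tr_self hnc1 (show Complex.abs (f b) < 1 from hm hb')
        rwa [Complex.abs.map_neg] at this
      have h3 : d₁ ≤ 1 - (Complex.abs (f b))^2 := by
        rw [hd₁def]
        nlinarith only [hfb, Complex.abs.nonneg (f b)]
      have h4 : 2 * Complex.abs (f 0) / (1 - (Complex.abs (f b))^2) ≤ 2 * e₁ / d₁ :=
        div_le_div₀ (by linarith) (by linarith) hd₁ h3
      rw [hβdef]
      linarith only [h1, h2, h4, he₂]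
    -- the Schwarz quotient
    obtain ⟨h, hhdef⟩ : ∃ q : ℂ → ℂ, q = dslope g 0 := ⟨_, rfl⟩
    have hh_diff : DifferentiableOn ℂ h unitDisc := by
      rw [hhdef]; exact dslope_differentiableOn hg_diff
    have hh_bound : ∀ x ∈ unitDisc, Complex.abs (h x) ≤ 1 := by
      intro x hx
      have h1 : MapsTo g (Metric.ball (0:ℂ) 1) (Metric.ball (g 0) 1) := by
        rw [hg0, ← unitDisc_eq_ball]; exact hg_maps
      have h2 : DifferentiableOn ℂ g (Metric.ball (0:ℂ) 1) := by
        rw [← unitDisc_eq_ball]; exact hg_diff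
      have h3 : x ∈ Metric.ball (0:ℂ) 1 := by rw [← unitDisc_eq_ball]; exact hx
      have h4 := Complex.norm_dslope_le_div_of_mapsTo_ball h2 (h1.mono_right ball_subset_closedBall) h3
      rw [hhdef]
      simpa [Complex.norm_eq_abs] using h4
    have hgx : ∀ x, g x = x * h x := by
      intro x
      rcases eq_or_ne x 0 with rfl | hx0
      · rw [hg0]; ring
      · rw [hhdef, dslope_of_ne g hx0, slope_def_field, hg0, sub_zero, sub_zero]
        field_simp
    -- |h b - 1| bound
    have hhb1 : Complex.abs (h b - 1) ≤ 2 * β / Complex.abs b := by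
      have h1 : b * (h b - 1) = g b - b := by rw [hgx b]; ring
      have h2 : Complex.abs b * Complex.abs (h b - 1) = Complex.abs (g b - b) := by
        rw [← map_mul, h1]
      have h3 : Complex.abs (g b - b) ≤ 2 * β := by
        rw [hβdef]
        exact abs_sub_le_two_pd (hg_maps hb') hb
      rw [le_div_iff₀ hb0', mul_comm, h2]
      exact h3
    have hKβ : K₆ * β = 2 * ρ₀ / (1 - ρ₀) * (2 * β / Complex.abs b) + 2 * β / Complex.abs b := by
      rw [hK₆def]; ring
    have hβb0 : 0 ≤ 2 * β / Complex.abs b := div_nonneg (by linarith) hb0'.le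
    -- uniform closeness of h to 1 on the ball of radius r
    have hkey : Complex.abs (h z - 1) ≤ K₆ * β := by
      have hmain : Complex.abs (h z - h b) + Complex.abs (h b - 1) ≤ K₆ * β := by
        by_cases hmaxc : ∃ x ∈ unitDisc, 1 ≤ Complex.abs (h x)
        · obtain ⟨x, hx, hx1⟩ := hmaxc
          have hmaxon : IsMaxOn (norm ∘ h) unitDisc x := by
            intro y hy
            simp only [Function.comp_apply, Complex.norm_eq_abs]
            exact le_trans (hh_bound y hy) hx1
          have heq := Complex.eqOn_of_isPreconnected_of_isMaxOn_norm
            (by rw [unitDisc_eq_ball]; exact (convex_ball _ _).isPreconnected)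
            isOpen_unitDisc hh_diff hx hmaxon
          have hzb : h z = h b := by
            have e1 : h z = h x := heq hz'
            have e2 : h b = h x := heq hb'
            rw [e1, e2]
          rw [hzb, sub_self, map_zero, zero_add]
          have h5 := mul_nonneg hq5 hβb0
          linarith only [hhb1, h5, hKβ]
        · push_neg at hmaxc
          have hh_maps : MapsTo h unitDisc unitDisc := fun x hx => hmaxc x hx
          have hsp : pd (h z) (h b) ≤ ρ₀ := by
            have h1 := schwarz_pick hh_diff hh_maps hz' hb'
            have h2 : pd z b ≤ ρ₀ := by
              refine le_trans (pd_le_add_div hz hb) ?_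
              rw [hρ₀def]
              exact frac_mono (Complex.abs.nonneg z) hzr (Complex.abs.nonneg b) hb
            linarith only [h1, h2]
          have hhz1 : Complex.abs (h z) < 1 := hmaxc z hz'
          have hhb1' : Complex.abs (h b) < 1 := hmaxc b hb'
          obtain ⟨D, hDdef⟩ : ∃ x : ℝ, x = Complex.abs (h z - h b) := ⟨_, rfl⟩
          have hD0 : 0 ≤ D := by rw [hDdef]; exact Complex.abs.nonneg _
          have hden_pos : (0:ℝ) < Complex.abs (1 - (starRingEnd ℂ) (h b) * h z) :=
            Complex.abs.pos (denom_ne_zero hhz1 hhb1')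
          have hDeq : D = pd (h z) (h b) * Complex.abs (1 - (starRingEnd ℂ) (h b) * h z) := by
            rw [hDdef, pd_eq_div, div_mul_cancel₀]
            exact ne_of_gt hden_pos
          have hsplit : Complex.abs (1 - (starRingEnd ℂ) (h b) * h z)
              ≤ (1 - Complex.normSq (h b)) + D := by
            have e : (1 : ℂ) - (starRingEnd ℂ) (h b) * h z
                = ((1 - Complex.normSq (h b) : ℝ) : ℂ) + (starRingEnd ℂ) (h b) * (h b - h z) := by
              push_cast
              rw [Complex.normSq_eq_conj_mul_self]
              ring
            rw [e]
            refine le_trans (Complex.abs.add_le _ _) ?_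
            rw [Complex.abs_ofReal, map_mul, Complex.abs_conj]
            have h6 : Complex.normSq (h b) < 1 := by
              rw [← Complex.sq_abs]; nlinarith only [hhb1', Complex.abs.nonneg (h b)]
            have h7 : Complex.abs (h b - h z) = D := by
              rw [hDdef]; exact Complex.abs.map_sub _ _
            rw [_root_.abs_of_nonneg (by linarith only [h6] : (0:ℝ) ≤ 1 - Complex.normSq (h b)), h7]
            nlinarith only [hD0, hhb1'.le, Complex.abs.nonneg (h b),
              mul_le_mul_of_nonneg_right hhb1'.le hD0]
          have hnsb : 1 - Complex.normSq (h b) ≤ 2 * (2 * β / Complex.abs b) := by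
            have h8 : 1 - Complex.abs (h b) ≤ Complex.abs (h b - 1) := by
              have h9 := Complex.abs.abs_abv_sub_le_abv_sub (h b) 1
              rw [map_one] at h9
              have h10 := abs_le.1 h9
              linarith [h10.1]
            have h10 : Complex.normSq (h b) = (Complex.abs (h b))^2 := (Complex.sq_abs _).symm
            have e : 1 - Complex.normSq (h b)
                = (1 - Complex.abs (h b)) * (1 + Complex.abs (h b)) := by rw [h10]; ring
            have s1 : (1 - Complex.abs (h b)) * (1 + Complex.abs (h b))
                ≤ Complex.abs (h b - 1) * 2 :=
              mul_le_mul h8 (by linarith only [hhb1'] : 1 + Complex.abs (h b) ≤ 2)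
                (by linarith only [Complex.abs.nonneg (h b)]) (Complex.abs.nonneg _)
            linarith only [e, s1, hhb1]
          have hDle : D * (1 - ρ₀) ≤ 2 * ρ₀ * (2 * β / Complex.abs b) := by
            have h11 : D ≤ ρ₀ * ((1 - Complex.normSq (h b)) + D) := by
              conv_lhs => rw [hDeq]
              exact mul_le_mul hsp hsplit (Complex.abs.nonneg _) hρ₀0
            nlinarith only [h11, mul_le_mul_of_nonneg_left hnsb hρ₀0]
          have hDfin : D ≤ 2 * ρ₀ / (1 - ρ₀) * (2 * β / Complex.abs b) := by
            rw [div_mul_eq_mul_div, le_div_iff₀ (by linarith only [hρ₀lt] : (0:ℝ) < 1 - ρ₀)]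
            linarith only [hDle]
          rw [← hDdef]
          linarith only [hDfin, hhb1, hKβ]
      calc Complex.abs (h z - 1)
          ≤ Complex.abs (h z - h b) + Complex.abs (h b - 1) := by
            have e : h z - 1 = (h z - h b) + (h b - 1) := by ring
            rw [e]; exact Complex.abs.add_le _ _
        _ ≤ K₆ * β := hmain
    -- displacement of g
    have hgz_abs : Complex.abs (g z) ≤ Complex.abs z := by
      rw [hgx z, map_mul]
      have h5 := mul_le_mul_of_nonneg_left (hh_bound z hz') (Complex.abs.nonneg z)
      simpa using h5
    have hgz : pd (g z) z ≤ K₆ * β / (1 - r^2) := by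
      have h1 : Complex.abs (g z - z) ≤ K₆ * β := by
        have e : g z - z = z * (h z - 1) := by rw [hgx z]; ring
        rw [e, map_mul]
        have h5 := mul_le_mul hz.le hkey (Complex.abs.nonneg _) zero_le_one
        simpa using h5
      have h2 : 1 - r^2 ≤ Complex.abs (1 - (starRingEnd ℂ) z * g z) := by
        have h3 : Complex.abs ((starRingEnd ℂ) z * g z) ≤ r^2 := by
          rw [map_mul, Complex.abs_conj]
          have h5 := mul_le_mul hzr (hgz_abs.trans hzr) (Complex.abs.nonneg _) hr0
          nlinarith only [h5]
        have h4 := Complex.abs.abs_abv_sub_le_abv_sub 1 ((starRingEnd ℂ) z * g z)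
        rw [map_one] at h4
        linarith only [h4, h3, le_abs_self (1 - Complex.abs ((starRingEnd ℂ) z * g z))]
      rw [pd_eq_div]
      exact div_le_div₀ (mul_nonneg hK₆0.le hβ0) h1 hr2 h2
    -- assemble
    have htrc : pd (tr (f 0) z) z ≤ 2 * e₁ / (1 - r^2) := by
      have h1 := pd_tr_self hc1 hz
      have h2 : 1 - r^2 ≤ 1 - (Complex.abs z)^2 := by
        nlinarith only [hzr, Complex.abs.nonneg z, hr0]
      calc pd (tr (f 0) z) z ≤ 2 * Complex.abs (f 0) / (1 - (Complex.abs z)^2) := h1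
        _ ≤ 2 * e₁ / (1 - r^2) :=
            div_le_div₀ (by linarith only [he₁0]) (by linarith only [hcabs]) hr2 h2
    have hfinal : pd (f z) z ≤ pd (g z) z + pd (tr (f 0) z) z := by
      have h1 : pd (f z) z ≤ pd (f z) (tr (f 0) z) + pd (tr (f 0) z) z :=
        pd_triangle (hm hz') (tr_mem hc1 hz) hz
      have h2 : pd (f z) (tr (f 0) z) = pd (g z) z := by
        rw [hfg z hz', pd_tr hc1 (hg_maps hz') hz]
      linarith only [h1, h2]
    have hβE : β ≤ (2 / d₁ + 1) * E := by
      have e : 2 * e₁ / d₁ = (2 / d₁) * e₁ := by ring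
      rw [e] at hβ
      rw [hEdef]
      nlinarith only [hβ, he₁0,
        mul_nonneg (div_nonneg (by norm_num : (0:ℝ) ≤ 2) hd₁.le) he₂0]
    calc pd (f z) z ≤ K₆ * β / (1 - r^2) + 2 * e₁ / (1 - r^2) := by linarith only [hfinal, hgz, htrc]
      _ ≤ (K₆ * (2 / d₁ + 1) + 2) / (1 - r^2) * E := by
          rw [← add_div, div_mul_eq_mul_div, div_le_div_iff₀ hr2 hr2]
          have h1 : K₆ * β ≤ K₆ * (2 / d₁ + 1) * E := by
            rw [mul_assoc]
            exact mul_le_mul_of_nonneg_left hβE hK₆0.le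
          have h6 : K₆ * β + 2 * e₁ ≤ (K₆ * (2 / d₁ + 1) + 2) * E := by
            nlinarith only [h1, he₁δ]
          nlinarith only [mul_le_mul_of_nonneg_right h6 hr2.le]
      _ ≤ C * E := by
          rw [hCdef]
          have h2 : 0 ≤ 2 / (1 - r) * E :=
            mul_nonneg (div_nonneg (by norm_num) (by linarith only [hr])) hE0
          nlinarith only [h2]
  -- LARGE CASE
  · have h1 : pd (f z) z < 1 := pd_lt_one (hm hz') hz
    have h2 : (1:ℝ) ≤ 2 / (1 - r) * E := by
      rw [hδ₀def] at hcase
      rw [div_mul_eq_mul_div, le_div_iff₀ (by linarith)]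
      linarith
    have h3 : 0 ≤ (K₆ * (2 / d₁ + 1) + 2) / (1 - r^2) * E := mul_nonneg hCa.le hE0
    rw [hCdef]
    nlinarith only [h1, h2, h3]

/-! ### The inequality at a general pair of points, and the derivative bound -/

lemma key_disp {a b : ℂ} (ha : Complex.abs a < 1) (hb : Complex.abs b < 1) (hab : a ≠ b)
    {R : ℝ} (hbR : pd b a ≤ R) (hR : R < 1) :
    ∃ C > 0, ∀ f : ℂ → ℂ, DifferentiableOn ℂ f unitDisc → MapsTo f unitDisc unitDisc →
      ∀ e₁ e₂ : ℝ, pd (f a) a ≤ e₁ → pd (f b) b ≤ e₂ →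
      ∀ z : ℂ, pd z a ≤ R → Complex.abs z < 1 → pd (f z) z ≤ C * (e₁ + e₂) := by
  have ha' : a ∈ unitDisc := ha
  have hb'mem : b ∈ unitDisc := hb
  have hb'1 : Complex.abs (mob a b) < 1 := mob_mem ha hb
  have hb'0 : mob a b ≠ 0 := by
    intro hzero
    apply hab
    rw [mob] at hzero
    rcases div_eq_zero_iff.1 hzero with h | h
    · exact sub_eq_zero.1 h
    · exact absurd h (denom_ne_zero hb ha)
  have hb'R : Complex.abs (mob a b) ≤ R := by rw [abs_mob]; exact hbR
  obtain ⟨C, hC, hcore⟩ := core_disp hb'0 hb'1 hb'R hR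
  refine ⟨C, hC, ?_⟩
  intro f hf hm e₁ e₂ he₁ he₂ z hzR hz
  set F : ℂ → ℂ := fun ζ => mob a (f (mob a ζ)) with hFdef
  have hF_diff : DifferentiableOn ℂ F unitDisc := by
    have h1 : DifferentiableOn ℂ (f ∘ mob a) unitDisc :=
      hf.comp (mob_differentiableOn ha) (mob_mapsTo ha)
    have h2 : MapsTo (f ∘ mob a) unitDisc unitDisc := hm.comp (mob_mapsTo ha)
    exact ((mob_differentiableOn ha).comp h1 h2).congr (fun x _ => rfl)
  have hF_maps : MapsTo F unitDisc unitDisc := fun x hx =>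
    mob_mem ha (hm (mob_mem ha hx))
  have hF0 : pd (F 0) 0 ≤ e₁ := by
    have e0 : F 0 = mob a (f a) := by
      show mob a (f (mob a 0)) = mob a (f a)
      rw [mob_zero]
    have e1 := pd_mob ha (show Complex.abs (f a) < 1 from hm ha') ha
    rw [mob_self] at e1
    rw [e0, e1]
    exact he₁
  have hFb : pd (F (mob a b)) (mob a b) ≤ e₂ := by
    have e0 : F (mob a b) = mob a (f b) := by
      show mob a (f (mob a (mob a b))) = mob a (f b)
      rw [mob_mob ha hb]
    have e1 := pd_mob ha (show Complex.abs (f b) < 1 from hm hb'mem) hb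
    rw [e0, e1]
    exact he₂
  have hzeta : Complex.abs (mob a z) ≤ R := by rw [abs_mob]; exact hzR
  have hfinal := hcore F hF_diff hF_maps e₁ e₂ hF0 hFb (mob a z) hzeta
  have e0 : F (mob a z) = mob a (f z) := by
    show mob a (f (mob a (mob a z))) = mob a (f z)
    rw [mob_mob ha hz]
  rw [e0, pd_mob ha (show Complex.abs (f z) < 1 from hm hz) hz] at hfinal
  exact hfinal

lemma deriv_lower {f : ℂ → ℂ} (hf : DifferentiableOn ℂ f unitDisc)
    {r r' m : ℝ} (hr0 : 0 ≤ r) (hrr' : r < r') (hr' : r' < 1) (hm0 : 0 ≤ m)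
    (hdisp : ∀ w : ℂ, Complex.abs w ≤ r' → Complex.abs (f w - w) ≤ m)
    {z : ℂ} (hz : Complex.abs z ≤ r) : 1 - m / (r' - r) ≤ Complex.abs (deriv f z) := by
  have hz1 : Complex.abs z < 1 := lt_of_le_of_lt (hz.trans hrr'.le) hr'
  have hz' : z ∈ unitDisc := hz1
  set u : ℂ → ℂ := fun w => f w - w with hudef
  have hu_diff : DifferentiableOn ℂ u unitDisc := hf.sub differentiableOn_id
  have hs : (0:ℝ) < r' - r := by linarith
  have hsub : Metric.closedBall z (r' - r) ⊆ unitDisc := by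
    intro w hw
    rw [Metric.mem_closedBall, Complex.dist_eq] at hw
    change Complex.abs (w - z) ≤ r' - r at hw
    have : Complex.abs w ≤ r' := by
      have h1 := Complex.abs.add_le (w - z) z
      simp only [sub_add_cancel] at h1
      linarith
    exact mem_unitDisc.2 (lt_of_le_of_lt this hr')
  have hcd : Complex.cderiv (r' - r) u z = deriv u z :=
    Complex.cderiv_eq_deriv isOpen_unitDisc hu_diff hs hsub
  have hbound : ‖Complex.cderiv (r' - r) u z‖ ≤ m / (r' - r) := by
    apply Complex.norm_cderiv_le hs
    intro w hw
    rw [Metric.mem_sphere, Complex.dist_eq] at hw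
    change Complex.abs (w - z) = r' - r at hw
    have hwr : Complex.abs w ≤ r' := by
      have h1 := Complex.abs.add_le (w - z) z
      simp only [sub_add_cancel] at h1
      rw [hw] at h1
      linarith
    simpa [hudef, Complex.norm_eq_abs] using hdisp w hwr
  rw [hcd] at hbound
  have hderiv_u : deriv u z = deriv f z - 1 := by
    have h1 : DifferentiableAt ℂ f z := (hf z hz').differentiableAt
      (isOpen_unitDisc.mem_nhds hz')
    rw [hudef]
    rw [deriv_fun_sub h1 differentiableAt_fun_id]
    simp
  rw [hderiv_u] at hbound
  have h2 : Complex.abs (deriv f z - 1) ≤ m / (r' - r) := by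
    simpa [Complex.norm_eq_abs] using hbound
  have h3 := Complex.abs.add_le (deriv f z - 1) (1 - deriv f z + deriv f z)
  have h4 : (1:ℝ) ≤ Complex.abs (deriv f z - 1) + Complex.abs (deriv f z) := by
    have e : (1:ℂ) = (1 - deriv f z) + deriv f z := by ring
    calc (1:ℝ) = Complex.abs ((1 - deriv f z) + deriv f z) := by rw [← e]; simp
      _ ≤ Complex.abs (1 - deriv f z) + Complex.abs (deriv f z) := Complex.abs.add_le _ _
      _ = Complex.abs (deriv f z - 1) + Complex.abs (deriv f z) := by
          rw [show (1:ℂ) - deriv f z = -(deriv f z - 1) by ring, Complex.abs.map_neg]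
  linarith

/-- Combined displacement and derivative bounds on a Euclidean ball. -/
lemma key_both {a b : ℂ} (ha : Complex.abs a < 1) (hb : Complex.abs b < 1) (hab : a ≠ b)
    {r : ℝ} (har : Complex.abs a ≤ r) (hbr : Complex.abs b ≤ r) (hr : r < 1) :
    ∃ C > 0, ∀ f : ℂ → ℂ, DifferentiableOn ℂ f unitDisc → MapsTo f unitDisc unitDisc →
      ∀ e₁ e₂ : ℝ, pd (f a) a ≤ e₁ → pd (f b) b ≤ e₂ →
      ∀ z : ℂ, Complex.abs z ≤ r →
        pd (f z) z ≤ C * (e₁ + e₂) ∧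
        1 - C * (e₁ + e₂) ≤ Complex.abs (deriv f z) := by
  have hr0 : 0 ≤ r := le_trans (Complex.abs.nonneg a) har
  obtain ⟨r', hr'def⟩ : ∃ x : ℝ, x = (1 + r) / 2 := ⟨_, rfl⟩
  have hrr' : r < r' := by rw [hr'def]; linarith
  have hr'1 : r' < 1 := by rw [hr'def]; linarith
  have hr'0 : 0 ≤ r' := by rw [hr'def]; linarith
  obtain ⟨R, hRdef⟩ : ∃ x : ℝ, x = (r' + Complex.abs a) / (1 + r' * Complex.abs a) := ⟨_, rfl⟩
  have hR1 : R < 1 := by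
    rw [hRdef]; exact frac_lt_one hr'0 hr'1 (Complex.abs.nonneg a) ha
  have hcover : ∀ z : ℂ, Complex.abs z ≤ r' → Complex.abs z < 1 → pd z a ≤ R := by
    intro z hzr' hz1
    refine le_trans (pd_le_add_div hz1 ha) ?_
    rw [hRdef]
    exact frac_mono (Complex.abs.nonneg z) hzr' (Complex.abs.nonneg a) ha
  have hbR : pd b a ≤ R := hcover b (hbr.trans hrr'.le) hb
  obtain ⟨C₀, hC₀, hdispC⟩ := key_disp ha hb hab hbR hR1
  obtain ⟨C, hCdef⟩ : ∃ x : ℝ, x = C₀ + 4 * C₀ / (1 - r) := ⟨_, rfl⟩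
  have hC40 : 0 < 4 * C₀ / (1 - r) := div_pos (by linarith) (by linarith)
  have hC : 0 < C := by rw [hCdef]; linarith
  refine ⟨C, hC, ?_⟩
  intro f hf hm e₁ e₂ he₁ he₂ z hzr
  have hE0 : 0 ≤ e₁ + e₂ := by
    have := le_trans (pd_nonneg _ _) he₁
    have := le_trans (pd_nonneg _ _) he₂
    linarith
  have hdisp' : ∀ w : ℂ, Complex.abs w ≤ r' → pd (f w) w ≤ C₀ * (e₁ + e₂) := by
    intro w hw
    have hw1 : Complex.abs w < 1 := lt_of_le_of_lt hw hr'1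
    exact hdispC f hf hm e₁ e₂ he₁ he₂ w (hcover w hw hw1) hw1
  have hCC₀ : C₀ * (e₁ + e₂) ≤ C * (e₁ + e₂) := by
    apply mul_le_mul_of_nonneg_right ?_ hE0
    rw [hCdef]; linarith
  constructor
  · exact le_trans (hdisp' z (hzr.trans hrr'.le)) hCC₀
  · have heucl : ∀ w : ℂ, Complex.abs w ≤ r' → Complex.abs (f w - w) ≤ 2 * (C₀ * (e₁ + e₂)) := by
      intro w hw
      have hw1 : Complex.abs w < 1 := lt_of_le_of_lt hw hr'1
      have h1 := abs_sub_le_two_pd (hm (mem_unitDisc.2 hw1)) hw1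
      have h2 := hdisp' w hw
      nlinarith only [h1, h2]
    have hml := deriv_lower hf hr0 hrr' hr'1
      (by positivity : (0:ℝ) ≤ 2 * (C₀ * (e₁ + e₂))) heucl hzr
    have harith : 1 - C * (e₁ + e₂) ≤ 1 - 2 * (C₀ * (e₁ + e₂)) / (r' - r) := by
      have e1 : r' - r = (1 - r) / 2 := by rw [hr'def]; ring
      have hne : (1:ℝ) - r ≠ 0 := by linarith
      have e2 : 2 * (C₀ * (e₁ + e₂)) / ((1 - r) / 2) = 4 * C₀ / (1 - r) * (e₁ + e₂) := by
        field_simp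
        ring
      rw [e1, e2, hCdef]
      nlinarith only [mul_nonneg hC₀.le hE0]
    linarith

lemma hdist_self (z : ℂ) : hdist z z = 0 := by
  rw [hdist_eq, pd_self]
  simp [artanh]

lemma unitDisc_preconnected : IsPreconnected unitDisc := by
  rw [unitDisc_eq_ball]; exact (convex_ball _ _).isPreconnected

set_option maxHeartbeats 1600000 in
/-- **Stability at the identity function, left compositions.** -/
theorem stability_identity_left
    (fseq : ℕ → ℂ → ℂ)
    (hholo : ∀ n, DifferentiableOn ℂ (fseq n) unitDisc)
    (hself : ∀ n, MapsTo (fseq n) unitDisc unitDisc)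
    (hnonconst : ∀ n, ∃ z ∈ unitDisc, ∃ w ∈ unitDisc, fseq n z ≠ fseq n w)
    (a b : ℂ) (ha : a ∈ unitDisc) (hb : b ∈ unitDisc) (hab : a ≠ b)
    (hsa : Summable fun n => hdist (fseq n a) a)
    (hsb : Summable fun n => hdist (fseq n b) b) :
    ∃ F : ℂ → ℂ, DifferentiableOn ℂ F unitDisc ∧ MapsTo F unitDisc unitDisc ∧
      (∃ z ∈ unitDisc, ∃ w ∈ unitDisc, F z ≠ F w) ∧
      TendstoLocallyUniformlyOn (leftComp fseq) F atTop unitDisc := by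
  classical
  have ha' : Complex.abs a < 1 := ha
  have hb' : Complex.abs b < 1 := hb
  -- basic properties of the compositions
  have hFm : ∀ n, MapsTo (leftComp fseq n) unitDisc unitDisc := by
    intro n
    induction n with
    | zero => exact fun z hz => hz
    | succ n ih => exact fun z hz => hself n (ih hz)
  have hFd : ∀ n, DifferentiableOn ℂ (leftComp fseq n) unitDisc := by
    intro n
    induction n with
    | zero => exact differentiableOn_id
    | succ n ih => exact ((hholo n).comp ih (hFm n)).congr (fun x _ => rfl)
  -- the error sequence
  obtain ⟨ε, hεdef⟩ : ∃ g : ℕ → ℝ, g = fun n => hdist (fseq n a) a + hdist (fseq n b) b :=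
    ⟨_, rfl⟩
  have hεsum : Summable ε := by rw [hεdef]; exact hsa.add hsb
  have hεnn : ∀ n, 0 ≤ ε n := by
    intro n
    rw [hεdef]
    exact add_nonneg (hdist_nonneg (hself n ha) ha') (hdist_nonneg (hself n hb) hb')
  have hεn : ∀ n, ε n = hdist (fseq n a) a + hdist (fseq n b) b := by
    intro n; rw [hεdef]
  have hshift : ∀ N, Summable (fun m => ε (N + m)) := by
    intro N
    have h1 := (summable_nat_add_iff N).2 hεsum
    have e : (fun m => ε (N + m)) = fun m => ε (m + N) := by
      funext m; rw [add_comm]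
    rw [e]; exact h1
  have htailnn : ∀ N, 0 ≤ ∑' m, ε (N + m) := fun N => tsum_nonneg (fun m => hεnn _)
  have ht : Tendsto (fun N => ∑' m, ε (N + m)) atTop (𝓝 0) := by
    have h1 : ∀ N, ∑' m, ε (N + m) = (∑' n, ε n) - ∑ i ∈ Finset.range N, ε i := by
      intro N
      have h2 := Summable.sum_add_tsum_nat_add N hεsum
      have h3 : ∑' m, ε (N + m) = ∑' i, ε (i + N) := by
        apply tsum_congr; intro m; rw [add_comm]
      rw [h3]; linarith only [h2]
    have h4 := hεsum.hasSum.tendsto_sum_nat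
    have h5 : Tendsto (fun N => (∑' n, ε n) - ∑ i ∈ Finset.range N, ε i) atTop
        (𝓝 ((∑' n, ε n) - ∑' n, ε n)) := tendsto_const_nhds.sub h4
    rw [sub_self] at h5
    simpa only [h1] using h5
  -- orbit bounds
  obtain ⟨Sa, hSadef⟩ : ∃ x : ℝ, x = ∑' n, hdist (fseq n a) a := ⟨_, rfl⟩
  have hSa0 : 0 ≤ Sa := by
    rw [hSadef]; exact tsum_nonneg (fun n => hdist_nonneg (hself n ha) ha')
  have horb_a : ∀ n, hdist (leftComp fseq n a) a ≤ Sa := by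
    have hpartial : ∀ n, hdist (leftComp fseq n a) a ≤ ∑ k ∈ Finset.range n, hdist (fseq k a) a := by
      intro n
      induction n with
      | zero => rw [show leftComp fseq 0 a = a from rfl, hdist_self]; simp
      | succ n ih =>
          have h1 : hdist (leftComp fseq (n+1) a) a
              ≤ hdist (fseq n (leftComp fseq n a)) (fseq n a) + hdist (fseq n a) a := by
            exact hdist_triangle (hself n (hFm n ha)) (hself n ha) ha'
          have h2 : hdist (fseq n (leftComp fseq n a)) (fseq n a) ≤ hdist (leftComp fseq n a) a :=
            hdist_schwarz_pick (hholo n) (hself n) (hFm n ha) ha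
          rw [Finset.sum_range_succ]
          linarith only [h1, h2, ih]
    intro n
    refine le_trans (hpartial n) ?_
    rw [hSadef]
    exact Summable.sum_le_tsum _ (fun k _ => hdist_nonneg (hself k ha) ha') hsa
  have horb : ∀ n (z : ℂ), Complex.abs z < 1 →
      hdist (leftComp fseq n z) z ≤ 2 * hdist z a + Sa := by
    intro n z hz
    have h1 : hdist (leftComp fseq n z) z
        ≤ hdist (leftComp fseq n z) (leftComp fseq n a) + hdist (leftComp fseq n a) z :=
      hdist_triangle (hFm n hz) (hFm n ha) hz
    have h2 : hdist (leftComp fseq n a) z ≤ hdist (leftComp fseq n a) a + hdist a z :=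
      hdist_triangle (hFm n ha) ha' hz
    have h3 : hdist (leftComp fseq n z) (leftComp fseq n a) ≤ hdist z a :=
      hdist_schwarz_pick (hFd n) (hFm n) hz ha
    have h4 : hdist a z = hdist z a := hdist_symm a z
    linarith only [h1, h2, h3, h4, horb_a n]
  -- uniform radius bound
  have hrad : ∀ r : ℝ, 0 ≤ r → r < 1 → ∃ r', 0 ≤ r' ∧ r' < 1 ∧
      ∀ n (z : ℂ), Complex.abs z ≤ r → Complex.abs (leftComp fseq n z) ≤ r' := by
    intro r hr0 hr1
    obtain ⟨B, hBdef⟩ : ∃ x : ℝ, x = 2 * (2 * artanh r + 2 * artanh (Complex.abs a)) + Sa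
        + 2 * artanh r := ⟨_, rfl⟩
    have hB0 : 0 ≤ B := by
      rw [hBdef]
      have h1 := artanh_nonneg hr0 hr1
      have h2 := artanh_nonneg (Complex.abs.nonneg a) ha'
      linarith only [h1, h2, hSa0]
    refine ⟨(Real.exp B - 1) / (Real.exp B + 1), exp_frac_nonneg hB0, exp_frac_lt_one B, ?_⟩
    intro n z hzr
    have hz1 : Complex.abs z < 1 := lt_of_le_of_lt hzr hr1
    have h1 : hdist (leftComp fseq n z) 0 ≤ hdist (leftComp fseq n z) z + hdist z 0 :=
      hdist_triangle (hFm n hz1) hz1 (by simpa using one_pos)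
    have h2 : hdist z a ≤ hdist z 0 + hdist 0 a :=
      hdist_triangle hz1 (by simpa using one_pos) ha'
    have h3 : hdist z 0 ≤ 2 * artanh r := by
      rw [hdist_zero_right]
      have := artanh_le_artanh (Complex.abs.nonneg z) hzr hr1
      linarith only [this]
    have h4 : hdist 0 a = 2 * artanh (Complex.abs a) := by
      rw [hdist_symm, hdist_zero_right]
    have h5 : hdist (leftComp fseq n z) 0 ≤ B := by
      rw [hBdef]
      have := horb n z hz1
      linarith only [h1, h2, h3, h4, this, horb n z hz1]
    exact abs_le_of_hdist_le (hFm n hz1) h5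
  -- the Cauchy-increment and derivative package on a euclidean ball
  have hpack : ∀ r : ℝ, Complex.abs a ≤ r → Complex.abs b ≤ r → r < 1 →
      ∃ C > 0, (∀ n (z : ℂ), Complex.abs z ≤ r →
          dist (leftComp fseq n z) (leftComp fseq (n+1) z) ≤ 2 * C * ε n) ∧
        (∀ n (z : ℂ), Complex.abs z ≤ r →
          1 - C * ε n ≤ Complex.abs (deriv (fseq n) (leftComp fseq n z))) := by
    intro r har hbr hr1
    have hr0 : 0 ≤ r := le_trans (Complex.abs.nonneg a) har
    obtain ⟨r', hr'0, hr'1, hr'bound⟩ := hrad r hr0 hr1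
    have hrr'' : r ≤ max r r' := le_max_left _ _
    have hr''1 : max r r' < 1 := max_lt hr1 hr'1
    obtain ⟨C, hC, hkb⟩ := key_both ha' hb' hab (har.trans hrr'') (hbr.trans hrr'') hr''1
    refine ⟨C, hC, ?_, ?_⟩
    · intro n z hzr
      have hw : Complex.abs (leftComp fseq n z) ≤ max r r' :=
        le_trans (hr'bound n z hzr) (le_max_right _ _)
      have hw1 : Complex.abs (leftComp fseq n z) < 1 := lt_of_le_of_lt hw hr''1
      have hres := hkb (fseq n) (hholo n) (hself n) _ _
        (pd_le_hdist (hself n ha) ha') (pd_le_hdist (hself n hb) hb') _ hw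
      have h1 := abs_sub_le_two_pd (hself n hw1) hw1
      rw [Complex.dist_eq]
      have h2 : leftComp fseq n z - leftComp fseq (n+1) z
          = -(fseq n (leftComp fseq n z) - leftComp fseq n z) := by
        show leftComp fseq n z - fseq n (leftComp fseq n z) = _
        ring
      rw [h2, Complex.norm_eq_abs, Complex.abs.map_neg]
      rw [hεn n]
      calc Complex.abs (fseq n (leftComp fseq n z) - leftComp fseq n z)
          ≤ 2 * pd (fseq n (leftComp fseq n z)) (leftComp fseq n z) := h1
        _ ≤ 2 * (C * (hdist (fseq n a) a + hdist (fseq n b) b)) := by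
            linarith only [hres.1]
        _ = 2 * C * (hdist (fseq n a) a + hdist (fseq n b) b) := by ring
    · intro n z hzr
      have hw : Complex.abs (leftComp fseq n z) ≤ max r r' :=
        le_trans (hr'bound n z hzr) (le_max_right _ _)
      have hres := hkb (fseq n) (hholo n) (hself n) _ _
        (pd_le_hdist (hself n ha) ha') (pd_le_hdist (hself n hb) hb') _ hw
      rw [hεn n]
      exact hres.2
  -- pointwise limits
  obtain ⟨Flim, hFlimdef⟩ : ∃ G : ℂ → ℂ, G = fun z => limUnder atTop (fun n => leftComp fseq n z) :=
    ⟨_, rfl⟩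
  have hptwise : ∀ z : ℂ, Complex.abs z < 1 →
      Tendsto (fun n => leftComp fseq n z) atTop (𝓝 (Flim z)) := by
    intro z hz
    have hr1 : max (max (Complex.abs a) (Complex.abs b)) (Complex.abs z) < 1 :=
      max_lt (max_lt ha' hb') hz
    obtain ⟨C, hC, hd, -⟩ := hpack _ ((le_max_left _ _).trans (le_max_left _ _))
      ((le_max_right _ _).trans (le_max_left _ _)) hr1
    have hcs : CauchySeq (fun n => leftComp fseq n z) := by
      apply cauchySeq_of_dist_le_of_summable (fun n => 2 * C * ε n)
      · intro n
        exact hd n z (le_max_right _ _)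
      · have := hεsum.mul_left (2 * C)
        simpa [mul_assoc] using this
    rw [hFlimdef]
    exact hcs.tendsto_limUnder
  -- locally uniform convergence
  have hTLU : TendstoLocallyUniformlyOn (leftComp fseq) Flim atTop unitDisc := by
    rw [tendstoLocallyUniformlyOn_iff_forall_isCompact isOpen_unitDisc]
    intro K hKsub hKc
    rcases K.eq_empty_or_nonempty with rfl | hKne
    · exact tendstoUniformlyOn_empty
    obtain ⟨z₀, hz₀K, hz₀max⟩ := hKc.exists_isMaxOn hKne Complex.continuous_abs.continuousOn
    have hz₀1 : Complex.abs z₀ < 1 := hKsub hz₀K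
    have hr1 : max (max (Complex.abs a) (Complex.abs b)) (Complex.abs z₀) < 1 :=
      max_lt (max_lt ha' hb') hz₀1
    obtain ⟨C, hC, hd, -⟩ := hpack _ ((le_max_left _ _).trans (le_max_left _ _))
      ((le_max_right _ _).trans (le_max_left _ _)) hr1
    have hKr : ∀ z ∈ K, Complex.abs z ≤ max (max (Complex.abs a) (Complex.abs b)) (Complex.abs z₀) := by
      intro z hz
      exact le_trans (hz₀max hz) (le_max_right _ _)
    have hsum2 : Summable (fun n => 2 * C * ε n) := by
      have := hεsum.mul_left (2 * C)
      simpa [mul_assoc] using this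
    have hδbound : ∀ (n : ℕ) (z : ℂ), z ∈ K →
        dist (leftComp fseq n z) (Flim z) ≤ ∑' m, 2 * C * ε (n + m) := by
      intro n z hz
      exact dist_le_tsum_of_dist_le_of_tendsto (fun k => 2 * C * ε k)
        (fun k => hd k z (hKr z hz)) hsum2 (hptwise z (hKsub hz)) n
    rw [Metric.tendstoUniformlyOn_iff]
    intro δ hδ
    have htail2 : Tendsto (fun n => 2 * C * (∑' m, ε (n + m))) atTop (𝓝 0) := by
      have := ht.const_mul (2 * C)
      simpa using this
    have hev := htail2.eventually_lt_const hδ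
    filter_upwards [hev] with n hn z hz
    have h7 := hδbound n z hz
    have h8 : ∑' m, 2 * C * ε (n + m) = 2 * C * ∑' m, ε (n + m) := by
      rw [tsum_mul_left]
    rw [dist_comm]
    calc dist (leftComp fseq n z) (Flim z) ≤ ∑' m, 2 * C * ε (n + m) := h7
      _ = 2 * C * ∑' m, ε (n + m) := h8
      _ < δ := hn
  -- differentiability of the limit
  have hFlimd : DifferentiableOn ℂ Flim unitDisc :=
    hTLU.differentiableOn (Eventually.of_forall hFd) isOpen_unitDisc
  -- the limit maps the disc to itself
  have hFlimm : MapsTo Flim unitDisc unitDisc := by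
    intro z hz
    have hz1 : Complex.abs z < 1 := hz
    have hr1 : max (max (Complex.abs a) (Complex.abs b)) (Complex.abs z) < 1 :=
      max_lt (max_lt ha' hb') hz1
    have hr0 : 0 ≤ max (max (Complex.abs a) (Complex.abs b)) (Complex.abs z) :=
      le_trans (Complex.abs.nonneg z) (le_max_right _ _)
    obtain ⟨r', hr'0, hr'1, hr'bound⟩ := hrad _ hr0 hr1
    have hbound : ∀ n, Complex.abs (leftComp fseq n z) ≤ r' := by
      intro n
      exact hr'bound n z (le_max_right _ _)
    have htendabs : Tendsto (fun n => Complex.abs (leftComp fseq n z)) atTop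
        (𝓝 (Complex.abs (Flim z))) :=
      (Complex.continuous_abs.tendsto _).comp (hptwise z hz1)
    have : Complex.abs (Flim z) ≤ r' :=
      le_of_tendsto htendabs (Eventually.of_forall hbound)
    exact mem_unitDisc.2 (lt_of_le_of_lt this hr'1)
  -- nonconstancy of each finite composition
  have hFnc : ∀ n, ∃ u, u ∈ unitDisc ∧ ∃ v, v ∈ unitDisc ∧
      leftComp fseq n u ≠ leftComp fseq n v := by
    intro n
    induction n with
    | zero =>
        refine ⟨0, zero_mem_unitDisc, 1/2, ?_, ?_⟩
        · rw [mem_unitDisc, show ((1:ℂ)/2) = ((1/2 : ℝ) : ℂ) by norm_num, Complex.abs_ofReal,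
            _root_.abs_of_nonneg (by norm_num : (0:ℝ) ≤ 1/2)]
          norm_num
        · show (0 : ℂ) ≠ 1/2
          norm_num
    | succ n ih =>
        obtain ⟨u, hu, v, hv, huv⟩ := ih
        have hA : AnalyticOnNhd ℂ (leftComp fseq n) unitDisc :=
          (hFd n).analyticOnNhd isOpen_unitDisc
        rcases hA.is_constant_or_isOpen unitDisc_preconnected with ⟨w, hw⟩ | hopen
        · exact absurd (by rw [hw u hu, hw v hv]) huv
        · have hVopen : IsOpen (leftComp fseq n '' unitDisc) :=
            hopen unitDisc subset_rfl isOpen_unitDisc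
          by_contra hcon
          push_neg at hcon
          obtain ⟨p, hpd, q, hqd, hpq⟩ := hnonconst n
          have hmem : leftComp fseq n 0 ∈ leftComp fseq n '' unitDisc :=
            mem_image_of_mem _ zero_mem_unitDisc
          have hev : fseq n =ᶠ[𝓝 (leftComp fseq n 0)]
              (fun _ => leftComp fseq (n+1) 0) := by
            apply eventuallyEq_of_mem (hVopen.mem_nhds hmem)
            rintro y ⟨x, hx, rfl⟩
            exact hcon x hx 0 zero_mem_unitDisc
          have hfa : AnalyticOnNhd ℂ (fseq n) unitDisc :=
            (hholo n).analyticOnNhd isOpen_unitDisc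
          have heqon := hfa.eqOn_of_preconnected_of_eventuallyEq analyticOnNhd_const
            unitDisc_preconnected (hFm n zero_mem_unitDisc) hev
          exact hpq (by rw [heqon hpd, heqon hqd])
  -- setup for the derivative lower bound
  obtain ⟨r₀, hr₀def⟩ : ∃ x : ℝ, x = max (max (Complex.abs a) (Complex.abs b)) (1/2) := ⟨_, rfl⟩
  have hr₀1 : r₀ < 1 := by
    rw [hr₀def]; exact max_lt (max_lt ha' hb') (by norm_num)
  have hr₀pos : 0 < r₀ := by
    rw [hr₀def]
    exact lt_of_lt_of_le (by norm_num) (le_max_right _ _)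
  have har₀ : Complex.abs a ≤ r₀ := by
    rw [hr₀def]; exact le_trans (le_max_left _ _) (le_max_left _ _)
  have hbr₀ : Complex.abs b ≤ r₀ := by
    rw [hr₀def]; exact le_trans (le_max_right _ _) (le_max_left _ _)
  obtain ⟨C, hC, -, hderC⟩ := hpack r₀ har₀ hbr₀ hr₀1
  obtain ⟨N, hN⟩ : ∃ N, C * (∑' m, ε (N + m)) < 1/2 := by
    have h1 : Tendsto (fun n => C * (∑' m, ε (n + m))) atTop (𝓝 0) := by
      have := ht.const_mul C
      simpa using this
    exact (h1.eventually_lt_const (by norm_num)).exists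
  have hStail : ∀ n, N ≤ n → ∑ k ∈ Finset.Ico N n, ε k ≤ ∑' m, ε (N + m) := by
    intro n hn
    rw [Finset.sum_Ico_eq_sum_range]
    exact Summable.sum_le_tsum _ (fun i _ => hεnn _) (hshift N)
  have hεtail : ∀ n, N ≤ n → ε n ≤ ∑' m, ε (N + m) := by
    intro n hn
    have e : ε n = ε (N + (n - N)) := by rw [Nat.add_sub_cancel' hn]
    rw [e]
    exact Summable.le_tsum (hshift N) _ (fun j _ => hεnn _)
  -- a point with nonvanishing derivative of F_N
  obtain ⟨z₀, hz₀r, hz₀ne⟩ : ∃ z₀ : ℂ, Complex.abs z₀ ≤ r₀ ∧ deriv (leftComp fseq N) z₀ ≠ 0 := by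
    by_contra hcon
    push_neg at hcon
    have hball : Metric.ball (0:ℂ) r₀ ⊆ unitDisc := by
      intro w hw
      rw [Metric.mem_ball, Complex.dist_eq, sub_zero] at hw
      exact mem_unitDisc.2 (lt_trans hw hr₀1)
    have hconst : ∀ x ∈ Metric.ball (0:ℂ) r₀, leftComp fseq N x = leftComp fseq N 0 := by
      intro x hx
      apply Convex.is_const_of_fderivWithin_eq_zero (convex_ball (0:ℂ) r₀)
        ((hFd N).mono hball) ?_ hx (Metric.mem_ball_self hr₀pos)
      intro y hy
      rw [fderivWithin_of_isOpen Metric.isOpen_ball hy]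
      have hy1 : Complex.abs y < r₀ := by
        rw [Metric.mem_ball, Complex.dist_eq, sub_zero] at hy
        exact hy
      have hdy : deriv (leftComp fseq N) y = 0 := hcon y hy1.le
      have hdiff : DifferentiableAt ℂ (leftComp fseq N) y :=
        ((hFd N) y (hball hy)).differentiableAt (isOpen_unitDisc.mem_nhds (hball hy))
      have h8 : HasDerivAt (leftComp fseq N) 0 y := by
        rw [← hdy]; exact hdiff.hasDerivAt
      have h9 := h8.hasFDerivAt.fderiv
      rw [h9]; ext w; simp
    have hev : leftComp fseq N =ᶠ[𝓝 (0:ℂ)] (fun _ => leftComp fseq N 0) :=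
      eventuallyEq_of_mem (Metric.isOpen_ball.mem_nhds (Metric.mem_ball_self hr₀pos)) hconst
    have heqon := ((hFd N).analyticOnNhd isOpen_unitDisc).eqOn_of_preconnected_of_eventuallyEq
      analyticOnNhd_const unitDisc_preconnected zero_mem_unitDisc hev
    obtain ⟨u, hu, v, hv, huv⟩ := hFnc N
    exact huv (by rw [heqon hu, heqon hv])
  have hz₀1 : Complex.abs z₀ < 1 := lt_of_le_of_lt hz₀r hr₀1
  have hz₀disc : z₀ ∈ unitDisc := hz₀1
  have hD₀ : 0 < Complex.abs (deriv (leftComp fseq N) z₀) := Complex.abs.pos hz₀ne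
  -- the derivative product bound
  have hprod : ∀ n, N ≤ n →
      Complex.abs (deriv (leftComp fseq N) z₀) * (1 - C * ∑ k ∈ Finset.Ico N n, ε k)
        ≤ Complex.abs (deriv (leftComp fseq n) z₀) := by
    intro n hn
    induction n, hn using Nat.le_induction with
    | base => simp
    | succ n hn ih =>
        have hw := hderC n z₀ hz₀r
        have hchain : deriv (leftComp fseq (n+1)) z₀
            = deriv (fseq n) (leftComp fseq n z₀) * deriv (leftComp fseq n) z₀ := by
          have h1 : DifferentiableAt ℂ (fseq n) (leftComp fseq n z₀) :=
            ((hholo n) _ (hFm n hz₀disc)).differentiableAt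
              (isOpen_unitDisc.mem_nhds (hFm n hz₀disc))
          have h2 : DifferentiableAt ℂ (leftComp fseq n) z₀ :=
            ((hFd n) z₀ hz₀disc).differentiableAt (isOpen_unitDisc.mem_nhds hz₀disc)
          exact deriv_comp (x := z₀) h1 h2
        rw [hchain, map_mul]
        have hsum : ∑ k ∈ Finset.Ico N (n+1), ε k = ∑ k ∈ Finset.Ico N n, ε k + ε n :=
          Finset.sum_Ico_succ_top hn _
        have hSnn : 0 ≤ ∑ k ∈ Finset.Ico N n, ε k :=
          Finset.sum_nonneg (fun k _ => hεnn k)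
        have hC1 : C * ε n < 1/2 :=
          lt_of_le_of_lt (mul_le_mul_of_nonneg_left (hεtail n hn) hC.le) hN
        have hC2 : C * ∑ k ∈ Finset.Ico N n, ε k < 1/2 :=
          lt_of_le_of_lt (mul_le_mul_of_nonneg_left (hStail n hn) hC.le) hN
        have hstep1 : Complex.abs (deriv (leftComp fseq N) z₀) * (1 - C * ∑ k ∈ Finset.Ico N (n+1), ε k)
            ≤ (1 - C * ε n) * (Complex.abs (deriv (leftComp fseq N) z₀)
              * (1 - C * ∑ k ∈ Finset.Ico N n, ε k)) := by
          rw [hsum]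
          nlinarith only [mul_nonneg (mul_nonneg hD₀.le (mul_nonneg hC.le hSnn))
            (mul_nonneg hC.le (hεnn n)), hD₀.le, hC.le, hSnn, hεnn n]
        have hstep2 : (1 - C * ε n) * (Complex.abs (deriv (leftComp fseq N) z₀)
              * (1 - C * ∑ k ∈ Finset.Ico N n, ε k))
            ≤ Complex.abs (deriv (fseq n) (leftComp fseq n z₀))
              * Complex.abs (deriv (leftComp fseq n) z₀) := by
          apply mul_le_mul hw ih ?_ (Complex.abs.nonneg _)
          apply mul_nonneg hD₀.le
          linarith only [hC2]
        linarith only [hstep1, hstep2]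
  -- pass to the limit
  have hTLUd := hTLU.deriv (Eventually.of_forall hFd) isOpen_unitDisc
  have hlim : Tendsto (fun n => deriv (leftComp fseq n) z₀) atTop (𝓝 (deriv Flim z₀)) :=
    hTLUd.tendsto_at hz₀disc
  have hfinal : Complex.abs (deriv (leftComp fseq N) z₀) * (1/2)
      ≤ Complex.abs (deriv Flim z₀) := by
    apply ge_of_tendsto ((Complex.continuous_abs.tendsto _).comp hlim)
    filter_upwards [eventually_ge_atTop N] with n hn
    have h1 := hprod n hn
    have hC2 : C * ∑ k ∈ Finset.Ico N n, ε k < 1/2 :=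
      lt_of_le_of_lt (mul_le_mul_of_nonneg_left (hStail n hn) hC.le) hN
    have h2 : Complex.abs (deriv (leftComp fseq N) z₀) * (1/2)
        ≤ Complex.abs (deriv (leftComp fseq N) z₀) * (1 - C * ∑ k ∈ Finset.Ico N n, ε k) := by
      apply mul_le_mul_of_nonneg_left ?_ hD₀.le
      linarith only [hC2]
    exact le_trans h2 h1
  have hdFlim : deriv Flim z₀ ≠ 0 := by
    intro h0
    rw [h0, map_zero] at hfinal
    nlinarith only [hfinal, hD₀]
  -- conclude
  refine ⟨Flim, hFlimd, hFlimm, ?_, hTLU⟩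
  by_contra hcon
  push_neg at hcon
  have hev : Flim =ᶠ[𝓝 z₀] (fun _ => Flim z₀) :=
    eventuallyEq_of_mem (isOpen_unitDisc.mem_nhds hz₀disc)
      (fun x hx => hcon x hx z₀ hz₀disc)
  have : deriv Flim z₀ = 0 := by
    rw [hev.deriv_eq]
    exact deriv_const _ _
  exact hdFlim this
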